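/- Let σ ∈ S_n be a product of disjoint cycles of length ≥ 3 with exactly k odd-length cycles, and suppose GGP(n,σ) contains a path of k consecutive exterior vertices u_{j}, u_{j+1}, …, u_{j+k−1} such that each u_{j+i} is joined by a spoke to a vertex of a different odd interior cycle. Then the P3-hull number of GGP(n,σ) equals ⌈(n+1)/2⌉. -/

import Mathlib

open SimpleGraph
open Fin.NatCast

def infectStep {V : Type*} (G : SimpleGraph V) (S : Set V) : Set V :=
  S ∪ {v | ∃ a b, a ≠ b ∧ a ∈ S ∧ b ∈ S ∧ G.Adj v a ∧ G.Adj v b}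

def infectIter {V : Type*} (G : SimpleGraph V) (S : Set V) : ℕ → Set V
  | 0 => S
  | p + 1 => infectStep G (infectIter G S p)

def IsHullSet {V : Type*} (G : SimpleGraph V) (S : Set V) : Prop :=
  ∃ p, infectIter G S p = Set.univ

noncomputable def hullNumber {V : Type*} (G : SimpleGraph V) : ℕ :=
  sInf {m | ∃ S : Set V, S.ncard = m ∧ IsHullSet G S}

noncomputable def infectTime {V : Type*} (G : SimpleGraph V) (S : Set V) : ℕ :=
  sInf {p | infectIter G S p = Set.univ}

def IsCubic {V : Type*} (G : SimpleGraph V) : Prop :=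
  ∀ v, {w | G.Adj v w}.ncard = 3

def IsDecyclingSet {V : Type*} (G : SimpleGraph V) (S : Set V) : Prop :=
  (G.induce Sᶜ).IsAcyclic

noncomputable def decyclingNumber {V : Type*} (G : SimpleGraph V) : ℕ :=
  sInf {m | ∃ S : Set V, S.ncard = m ∧ IsDecyclingSet G S}

def pHull {V : Type*} (G : SimpleGraph V) (S : Set V) : Set V :=
  ⋃ p, infectIter G S p

noncomputable def graphDiam {V : Type*} (G : SimpleGraph V) : ℕ :=
  sSup {d | ∃ a b, d = G.dist a b}

noncomputable def maxCompDiam {V : Type*} (G : SimpleGraph V) : ℕ :=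
  sSup {d | ∃ c : G.ConnectedComponent, d = graphDiam (G.induce c.supp)}

def genPetersen (n k : ℕ) [NeZero n] : SimpleGraph (Fin n ⊕ Fin n) :=
  SimpleGraph.fromRel fun x y =>
    match x, y with
    | Sum.inl i, Sum.inl j => j = i + 1
    | Sum.inl i, Sum.inr j => i = j
    | Sum.inr i, Sum.inr j => j = i + (k : Fin n)
    | _, _ => False

def GGP (n : ℕ) [NeZero n] (σ : Equiv.Perm (Fin n)) : SimpleGraph (Fin n ⊕ Fin n) :=
  SimpleGraph.fromRel fun x y =>
    match x, y with
    | Sum.inl i, Sum.inl j => j = i + 1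
    | Sum.inl i, Sum.inr j => i = j
    | Sum.inr i, Sum.inr j => j = σ i
    | _, _ => False


section Generic

variable {V : Type*} (G : SimpleGraph V)

lemma infectStep_mono {S T : Set V} (h : S ⊆ T) : infectStep G S ⊆ infectStep G T := by
  apply Set.union_subset_union h
  rintro v ⟨a, b, hab, ha, hb, h1, h2⟩
  exact ⟨a, b, hab, h ha, h hb, h1, h2⟩

lemma subset_infectStep (S : Set V) : S ⊆ infectStep G S := Set.subset_union_left

lemma infectIter_mono {S T : Set V} (h : S ⊆ T) (p : ℕ) :
    infectIter G S p ⊆ infectIter G T p := by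
  induction p with
  | zero => exact h
  | succ p ih => exact infectStep_mono G ih

lemma infectIter_subset_succ (S : Set V) (p : ℕ) :
    infectIter G S p ⊆ infectIter G S (p + 1) := subset_infectStep G _

lemma subset_infectIter (S : Set V) (p : ℕ) : S ⊆ infectIter G S p := by
  induction p with
  | zero => exact subset_rfl
  | succ p ih => exact ih.trans (infectIter_subset_succ G S p)

lemma infectIter_le_of_le (S : Set V) {p q : ℕ} (h : p ≤ q) :
    infectIter G S p ⊆ infectIter G S q := by
  induction q with
  | zero => simp_all
  | succ q ih =>
    rcases Nat.lt_or_ge p (q+1) with h' | h'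
    · exact (ih (Nat.lt_succ_iff.mp h')).trans (infectIter_subset_succ G S q)
    · have : p = q + 1 := le_antisymm h h'
      subst this; rfl

lemma IsHullSet.mono {S T : Set V} (h : S ⊆ T) (hS : IsHullSet G S) : IsHullSet G T := by
  obtain ⟨p, hp⟩ := hS
  exact ⟨p, Set.eq_univ_of_univ_subset (hp ▸ infectIter_mono G h p)⟩

lemma mem_infectStep_of {S : Set V} {v a b : V} (hab : a ≠ b) (ha : a ∈ S) (hb : b ∈ S)
    (h1 : G.Adj v a) (h2 : G.Adj v b) : v ∈ infectStep G S :=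
  Set.mem_union_right _ ⟨a, b, hab, ha, hb, h1, h2⟩

lemma infectStep_fixed {S : Set V} (h : infectStep G S = S) (p : ℕ) :
    infectIter G S p = S := by
  induction p with
  | zero => rfl
  | succ p ih => rw [infectIter, ih, h]

end Generic
section LowerBound
set_option linter.unusedSectionVars false

variable {V : Type*} [Fintype V] [DecidableEq V] (G : SimpleGraph V)
  (Nf : V → Finset V) (hNf : ∀ v w, w ∈ Nf v ↔ G.Adj v w) (hdeg : ∀ v, (Nf v).card = 3)

def phiPot (S : Finset V) : ℕ := ∑ v ∈ Sᶜ, (Nf v ∩ S).card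

include hNf in
lemma self_not_mem_Nf (v : V) : v ∉ Nf v := fun h => G.loopless.irrefl v ((hNf v v).mp h)

include hNf in
lemma Nf_symm {v w : V} : v ∈ Nf w ↔ w ∈ Nf v := by
  rw [hNf, hNf]; constructor <;> exact fun h => h.symm

include hNf in
lemma sum_indicator_eq (A : Finset V) (v : V) :
    ∑ w ∈ A, (if v ∈ Nf w then 1 else 0) = (Nf v ∩ A).card := by
  have h1 : Nf v ∩ A = A.filter (fun w => v ∈ Nf w) := by
    ext w
    simp only [Finset.mem_inter, Finset.mem_filter, Nf_symm G Nf hNf (v := v) (w := w), and_comm]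
  rw [h1, Finset.card_filter]

include hNf in
lemma serialize {S : Finset V} (hS : IsHullSet G ↑S) (hne : Sᶜ.Nonempty) :
    ∃ v ∈ Sᶜ, 2 ≤ (Nf v ∩ S).card ∧ IsHullSet G ↑(insert v S) := by
  have hstep : infectStep G ↑S ≠ ↑S := by
    intro h
    obtain ⟨p, hp⟩ := hS
    rw [infectStep_fixed G h p] at hp
    obtain ⟨w, hw⟩ := hne
    have : w ∈ (↑S : Set V) := hp ▸ Set.mem_univ w
    simp only [Finset.mem_coe] at this
    exact (Finset.mem_compl.mp hw) this
  have hsub : ¬ (infectStep G ↑S ⊆ ↑S) := fun h => hstep (le_antisymm h (subset_infectStep G _))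
  obtain ⟨v, hv1, hv2⟩ := Set.not_subset.mp hsub
  rcases hv1 with hv1 | hv1
  · exact absurd hv1 hv2
  obtain ⟨a, b, hab, ha, hb, h1, h2⟩ := hv1
  refine ⟨v, Finset.mem_compl.mpr (by simpa using hv2), ?_, ?_⟩
  · have hsub2 : {a, b} ⊆ Nf v ∩ S := by
      intro x hx
      rcases Finset.mem_insert.mp hx with rfl | hx
      · exact Finset.mem_inter.mpr ⟨(hNf v x).mpr h1, by simpa using ha⟩
      · rcases Finset.mem_singleton.mp hx with rfl
        exact Finset.mem_inter.mpr ⟨(hNf v x).mpr h2, by simpa using hb⟩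
    calc 2 = ({a, b} : Finset V).card := (Finset.card_pair hab).symm
    _ ≤ _ := Finset.card_le_card hsub2
  · apply IsHullSet.mono G (T := ↑(insert v S)) _ hS
    simp only [Finset.coe_insert]
    exact Set.subset_insert _ _

include hNf hdeg in
lemma phi_lower : ∀ t (S : Finset V), Sᶜ.card = t → 1 ≤ t → IsHullSet G ↑S →
    t + 2 ≤ phiPot Nf S := by
  intro t
  induction t using Nat.strong_induction_on with
  | _ t ih =>
  intro S hcard ht hS
  obtain ⟨v, hv, hv2, hv3⟩ := serialize G Nf hNf hS (Finset.card_pos.mp (hcard ▸ ht))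
  have hvS : v ∉ S := Finset.mem_compl.mp hv
  set S' := insert v S with hS'def
  have hcompl' : S'ᶜ = Sᶜ.erase v := by
    ext w; simp [hS'def, Finset.mem_compl, Finset.mem_erase, and_comm, not_or]
  have hcard' : S'ᶜ.card = t - 1 := by
    rw [hcompl', Finset.card_erase_of_mem hv, hcard]
  have hvNf : v ∉ Nf v := self_not_mem_Nf G Nf hNf v
  -- split Phi S
  have hsplit : phiPot Nf S = (Nf v ∩ S).card + ∑ w ∈ Sᶜ.erase v, (Nf w ∩ S).card := by
    rw [phiPot, ← Finset.sum_erase_add _ _ hv]; ring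
  -- compute Phi S'
  have hterm : ∀ w ∈ Sᶜ.erase v, (Nf w ∩ S').card
      = (Nf w ∩ S).card + (if v ∈ Nf w then 1 else 0) := by
    intro w hw
    have hins : Nf w ∩ S' = if v ∈ Nf w then insert v (Nf w ∩ S) else Nf w ∩ S := by
      split_ifs with hvw
      · rw [hS'def, Finset.inter_insert_of_mem hvw]
      · rw [hS'def, Finset.inter_insert_of_notMem hvw]
    rw [hins]
    split_ifs with hvw
    · rw [Finset.card_insert_of_notMem (fun hc => hvS (Finset.mem_inter.mp hc).2)]
    · simp
  have hsplit' : phiPot Nf S' = (∑ w ∈ Sᶜ.erase v, (Nf w ∩ S).card) + (Nf v ∩ Sᶜ.erase v).card := by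
    rw [phiPot, hcompl', Finset.sum_congr rfl hterm, Finset.sum_add_distrib,
      sum_indicator_eq G Nf hNf]
  -- Nf v partition
  have hpart : (Nf v ∩ S).card + (Nf v ∩ Sᶜ.erase v).card = 3 := by
    rw [← hdeg v]
    rw [← Finset.card_union_of_disjoint]
    · congr 1
      ext x
      simp only [Finset.mem_union, Finset.mem_inter, Finset.mem_erase, Finset.mem_compl]
      constructor
      · rintro (⟨h, _⟩ | ⟨h, _⟩) <;> exact h
      · intro hx
        by_cases hxS : x ∈ S
        · exact Or.inl ⟨hx, hxS⟩
        · refine Or.inr ⟨hx, ?_, hxS⟩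
          rintro rfl; exact hvNf hx
    · simp only [Finset.disjoint_left, Finset.mem_inter, Finset.mem_erase, Finset.mem_compl]
      rintro x ⟨_, hxS⟩ ⟨_, _, hc⟩; exact hc hxS
  -- cases on whether S' is everything
  by_cases hfin : S'ᶜ.card = 0
  · -- t = 1 : Phi S = (Nf v ∩ S).card and Nf v ⊆ S
    have ht1 : t = 1 := by omega
    have hSc : Sᶜ = {v} := by
      have : Sᶜ.card = 1 := hcard ▸ ht1
      obtain ⟨w, hw⟩ := Finset.card_eq_one.mp this
      have : v = w := by have := hw ▸ hv; simpa using this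
      rw [hw, this]
    have hNfv : Nf v ∩ Sᶜ.erase v = ∅ := by
      rw [hSc]; simp
    have : (Nf v ∩ S).card = 3 := by
      have := hpart; rw [hNfv] at this; simpa using this
    rw [hsplit, ht1]
    have : ∑ w ∈ Sᶜ.erase v, (Nf w ∩ S).card = 0 := by
      rw [hSc]; simp
    omega
  · have hrec := ih (t-1) (by omega) S' hcard' (by omega) hv3
    -- Phi S ≥ Phi S' + 1
    have key : phiPot Nf S' + 1 ≤ phiPot Nf S := by
      rw [hsplit, hsplit']
      have h3 : (Nf v ∩ Sᶜ.erase v).card ≤ 1 := by omega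
      omega
    omega

include hNf hdeg in
lemma phi_upper (S : Finset V) : phiPot Nf S ≤ 3 * S.card := by
  have h1 : ∀ v, (Nf v ∩ S).card = ∑ w ∈ S, (if v ∈ Nf w then 1 else 0) := by
    intro v
    rw [sum_indicator_eq G Nf hNf]
  have h2 : ∀ w, (Nf w ∩ Sᶜ).card = ∑ v ∈ Sᶜ, (if w ∈ Nf v then 1 else 0) := by
    intro w
    rw [sum_indicator_eq G Nf hNf]
  calc phiPot Nf S = ∑ v ∈ Sᶜ, ∑ w ∈ S, (if v ∈ Nf w then 1 else 0) := by
        rw [phiPot]; exact Finset.sum_congr rfl (fun v _ => h1 v)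
  _ = ∑ w ∈ S, ∑ v ∈ Sᶜ, (if v ∈ Nf w then 1 else 0) := Finset.sum_comm
  _ = ∑ w ∈ S, ∑ v ∈ Sᶜ, (if w ∈ Nf v then 1 else 0) := by
        refine Finset.sum_congr rfl fun w _ => Finset.sum_congr rfl fun v _ => ?_
        by_cases h : v ∈ Nf w
        · rw [if_pos h, if_pos ((Nf_symm G Nf hNf).mp h)]
        · rw [if_neg h, if_neg (fun hc => h ((Nf_symm G Nf hNf).mp hc))]
  _ = ∑ w ∈ S, (Nf w ∩ Sᶜ).card := by
        exact Finset.sum_congr rfl (fun w _ => (h2 w).symm)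
  _ ≤ ∑ w ∈ S, 3 := by
        refine Finset.sum_le_sum fun w _ => ?_
        calc (Nf w ∩ Sᶜ).card ≤ (Nf w).card := Finset.card_le_card Finset.inter_subset_left
        _ = 3 := hdeg w
  _ = 3 * S.card := by rw [Finset.sum_const, smul_eq_mul, mul_comm]

include hNf hdeg in
lemma cubic_hull_lower {S : Finset V} (hS : IsHullSet G ↑S) :
    Fintype.card V + 2 ≤ 4 * S.card ∨ S.card = Fintype.card V := by
  by_cases h : Sᶜ.card = 0
  · right
    have : S = Finset.univ := by
      have h0 : Sᶜ = ∅ := Finset.card_eq_zero.mp h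
      rwa [Finset.compl_eq_empty_iff] at h0
    rw [this, Finset.card_univ]
  · left
    have h1 := phi_lower G Nf hNf hdeg (Sᶜ.card) S rfl (by omega) hS
    have h2 := phi_upper G Nf hNf hdeg S
    have h3 : Sᶜ.card = Fintype.card V - S.card := by
      rw [Finset.card_compl]
    have h4 : S.card ≤ Fintype.card V := Finset.card_le_univ S
    omega

end LowerBound
section GGPBasics
set_option linter.unusedSectionVars false

open Sum

variable {n : ℕ} [NeZero n] (σ : Equiv.Perm (Fin n))

lemma fin_one_ne_zero' (hn : 3 ≤ n) : (1 : Fin n) ≠ 0 := by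
  have : ((1:ℕ) : Fin n) ≠ 0 := by
    rw [Ne, Fin.natCast_eq_zero]
    intro h
    have := Nat.le_of_dvd one_pos h
    omega
  simpa using this

lemma fin_two_ne_zero' (hn : 3 ≤ n) : (2 : Fin n) ≠ 0 := by
  have : ((2:ℕ) : Fin n) ≠ 0 := by
    rw [Ne, Fin.natCast_eq_zero]
    intro h
    have := Nat.le_of_dvd two_pos h
    omega
  simpa using this

lemma fin_succ_ne_self (hn : 3 ≤ n) (i : Fin n) : i + 1 ≠ i := by
  intro h
  have : (1 : Fin n) = 0 := by
    have := congrArg (· - i) h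
    simpa [add_comm, add_sub_cancel_right, sub_self] using this
  exact fin_one_ne_zero' hn this

lemma ggp_adj_ll (hn : 3 ≤ n) (i i' : Fin n) :
    (GGP n σ).Adj (inl i) (inl i') ↔ (i' = i + 1 ∨ i = i' + 1) := by
  rw [GGP, SimpleGraph.fromRel_adj]
  constructor
  · rintro ⟨-, h | h⟩
    · exact Or.inl h
    · exact Or.inr h
  · intro h
    refine ⟨?_, ?_⟩
    · rcases h with h | h <;> intro hc <;> rw [inl.injEq] at hc
      · rw [← hc] at h; exact fin_succ_ne_self hn i h.symm
      · rw [hc] at h; exact fin_succ_ne_self hn i' h.symm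
    · rcases h with h | h
      · exact Or.inl h
      · exact Or.inr h

lemma ggp_adj_lr (i i' : Fin n) : (GGP n σ).Adj (inl i) (inr i') ↔ i = i' := by
  rw [GGP, SimpleGraph.fromRel_adj]
  constructor
  · rintro ⟨-, h | h⟩
    · exact h
    · exact h.elim
  · rintro rfl
    exact ⟨by simp, Or.inl rfl⟩

lemma ggp_adj_rr (hfix : ∀ i, σ i ≠ i) (i i' : Fin n) :
    (GGP n σ).Adj (inr i) (inr i') ↔ (i' = σ i ∨ i = σ i') := by
  rw [GGP, SimpleGraph.fromRel_adj]
  constructor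
  · rintro ⟨-, h | h⟩
    · exact Or.inl h
    · exact Or.inr h
  · intro h
    refine ⟨?_, ?_⟩
    · rcases h with h | h <;> intro hc <;> rw [inr.injEq] at hc
      · rw [← hc] at h; exact hfix i h.symm
      · rw [hc] at h; exact hfix i' h.symm
    · rcases h with h | h
      · exact Or.inl h
      · exact Or.inr h

lemma ggp_adj_rl (i i' : Fin n) : (GGP n σ).Adj (inr i) (inl i') ↔ i' = i := by
  rw [SimpleGraph.adj_comm, ggp_adj_lr]

/-- Explicit neighbor finsets for GGP. -/
def NfGGP (i : Fin n ⊕ Fin n) : Finset (Fin n ⊕ Fin n) :=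
  match i with
  | inl i => {inl (i+1), inl (i-1), inr i}
  | inr i => {inr (σ i), inr (σ⁻¹ i), inl i}

lemma NfGGP_spec (hn : 3 ≤ n) (hfix : ∀ i, σ i ≠ i) :
    ∀ v w, w ∈ NfGGP σ v ↔ (GGP n σ).Adj v w := by
  rintro (i | i) (i' | i') <;>
    simp only [NfGGP, Finset.mem_insert, Finset.mem_singleton, ggp_adj_ll σ hn,
      ggp_adj_lr, ggp_adj_rr σ hfix, ggp_adj_rl, inl.injEq, inr.injEq, reduceCtorEq,
      or_false, false_or]
  · constructor
    · rintro (h | h)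
      · exact Or.inl h
      · right; rw [h]; rw [sub_add_cancel]
    · rintro (h | h)
      · exact Or.inl h
      · right; rw [h]; rw [add_sub_cancel_right]
  · exact eq_comm
  · constructor
    · rintro (h | h)
      · exact Or.inl h
      · right; rw [h]; simp
    · rintro (h | h)
      · exact Or.inl h
      · right; rw [h]; simp

lemma NfGGP_card (hn : 3 ≤ n) (hfix : ∀ i, σ i ≠ i) (hsq : ∀ i, σ (σ i) ≠ i) :
    ∀ v, (NfGGP σ v).card = 3 := by
  rintro (i | i)
  · have h1 : (inl (i+1) : Fin n ⊕ Fin n) ≠ inl (i-1) := by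
      rw [Ne, inl.injEq]
      intro h
      have h2 : (2 : Fin n) = 0 := by
        have := congrArg (· + (1 - i)) h
        rw [show i + 1 + (1 - i) = 2 by rw [← one_add_one_eq_two]; abel, show i - 1 + (1 - i) = 0 by abel] at this
        exact this
      exact fin_two_ne_zero' hn h2
    rw [NfGGP]
    rw [Finset.card_insert_of_notMem (by simp [h1]), Finset.card_insert_of_notMem (by simp)]
    simp
  · have h1 : (inr (σ i) : Fin n ⊕ Fin n) ≠ inr (σ⁻¹ i) := by
      rw [Ne, inr.injEq]
      intro h
      exact hsq i (by rw [h]; simp)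
    rw [NfGGP]
    rw [Finset.card_insert_of_notMem (by simpa using h1), Finset.card_insert_of_notMem (by simp)]
    simp

end GGPBasics
section PermLemmas
set_option linter.unusedSectionVars false

open Equiv Equiv.Perm

variable {n : ℕ} [NeZero n] {σ : Equiv.Perm (Fin n)}

lemma card_cycleOf_mem_cycleType (hfix : ∀ i, σ i ≠ i) (i : Fin n) :
    (σ.cycleOf i).support.card ∈ σ.cycleType := by
  rw [cycleType_def]
  refine Multiset.mem_map.mpr ⟨σ.cycleOf i, ?_, rfl⟩
  rw [← Finset.mem_def]
  exact cycleOf_mem_cycleFactorsFinset_iff.mpr (mem_support.mpr (hfix i))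

lemma three_le_card_cycleOf (hfix : ∀ i, σ i ≠ i) (hlen : ∀ c ∈ σ.cycleType, 3 ≤ c)
    (i : Fin n) : 3 ≤ (σ.cycleOf i).support.card :=
  hlen _ (card_cycleOf_mem_cycleType hfix i)

lemma sigma_sq_ne (hfix : ∀ i, σ i ≠ i) (hlen : ∀ c ∈ σ.cycleType, 3 ≤ c) (i : Fin n) :
    σ (σ i) ≠ i := by
  intro h
  have hcyc : (σ.cycleOf i).IsCycle := isCycle_cycleOf σ (hfix i)
  have h2 : (σ.cycleOf i ^ 2) i = i := by
    rw [cycleOf_pow_apply_self, pow_two, Equiv.Perm.mul_apply, h]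
  have hone : σ.cycleOf i ^ 2 = 1 := by
    rw [hcyc.pow_eq_one_iff]
    refine ⟨i, ?_, h2⟩
    rw [cycleOf_apply_self]
    exact hfix i
  have hdvd : orderOf (σ.cycleOf i) ∣ 2 := orderOf_dvd_of_pow_eq_one hone
  rw [hcyc.orderOf] at hdvd
  have h3 := three_le_card_cycleOf hfix hlen i
  have := Nat.le_of_dvd two_pos hdvd
  omega

variable {k : ℕ} {j : Fin n}

/-- every odd cycle factor is one of the distinguished ones -/
lemma odd_factor_eq (hfix : ∀ i, σ i ≠ i)
    (hk : k = Multiset.card (σ.cycleType.filter (fun m => Odd m)))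
    (hodd : ∀ i : ℕ, i < k → Odd (σ.cycleOf (j + (i : Fin n))).support.card)
    (hdist : ∀ i₁ i₂ : ℕ, i₁ < k → i₂ < k → i₁ ≠ i₂ →
      σ.cycleOf (j + (i₁ : Fin n)) ≠ σ.cycleOf (j + (i₂ : Fin n)))
    {c : Equiv.Perm (Fin n)} (hc : c ∈ σ.cycleFactorsFinset)
    (hcodd : Odd c.support.card) : ∃ i : ℕ, i < k ∧ c = σ.cycleOf (j + (i : Fin n)) := by
  classical
  set OddF := σ.cycleFactorsFinset.filter (fun c => Odd c.support.card) with hOddF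
  have hcardOddF : OddF.card = k := by
    rw [hk, cycleType_def, Multiset.filter_map, Multiset.card_map]
    have : Multiset.filter ((fun m => Odd m) ∘ Finset.card ∘ Equiv.Perm.support)
        σ.cycleFactorsFinset.val
        = Multiset.filter (fun c => Odd c.support.card) σ.cycleFactorsFinset.val := by
      apply Multiset.filter_congr
      intro x _
      rfl
    rw [this]
    rfl
  set Im := (Finset.range k).image (fun i : ℕ => σ.cycleOf (j + (i : Fin n))) with hIm
  have hImsub : Im ⊆ OddF := by
    intro c hc
    obtain ⟨i, hi, rfl⟩ := Finset.mem_image.mp hc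
    rw [Finset.mem_range] at hi
    refine Finset.mem_filter.mpr ⟨?_, hodd i hi⟩
    exact cycleOf_mem_cycleFactorsFinset_iff.mpr (mem_support.mpr (hfix _))
  have hInj : Set.InjOn (fun i : ℕ => σ.cycleOf (j + (i : Fin n))) ↑(Finset.range k) := by
    intro a ha b hb hab
    simp only [Finset.coe_range, Set.mem_Iio] at ha hb
    by_contra hne
    exact hdist a b ha hb hne hab
  have hcardIm : Im.card = k := by
    rw [hIm, Finset.card_image_of_injOn hInj, Finset.card_range]
  have : OddF = Im := (Finset.eq_of_subset_of_card_le hImsub (by omega)).symm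
  have hcmem : c ∈ Im := by
    rw [← this]
    exact Finset.mem_filter.mpr ⟨hc, hcodd⟩
  obtain ⟨i, hi, hieq⟩ := Finset.mem_image.mp hcmem
  exact ⟨i, Finset.mem_range.mp hi, hieq.symm⟩

end PermLemmas
section Construction
set_option linter.unusedSectionVars false

open Equiv Equiv.Perm Sum

lemma range_filter_odd_card (L : ℕ) :
    ((Finset.range L).filter (fun m => m % 2 = 1)).card = L / 2 := by
  induction L with
  | zero => simp
  | succ L ih =>
    rw [Finset.range_add_one, Finset.filter_insert]
    split_ifs with h
    · rw [Finset.card_insert_of_notMem (by simp), ih]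
      omega
    · rw [ih]; omega

variable {n : ℕ} [NeZero n] (σ : Equiv.Perm (Fin n)) (k : ℕ) (j : Fin n)

/-- base point of a cycle factor -/
noncomputable def basePt (c : Equiv.Perm (Fin n)) : Fin n :=
  if h : ∃ i, i < k ∧ j + (i : Fin n) ∈ c.support then j + ((Classical.choose h : ℕ) : Fin n)
  else if h2 : c.support.Nonempty then c.support.min' h2 else 0

lemma basePt_mem {c : Equiv.Perm (Fin n)} (hc : c ∈ σ.cycleFactorsFinset) :
    basePt k j c ∈ c.support := by
  rw [basePt]
  split_ifs with h h2
  · exact (Classical.choose_spec h).2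
  · exact c.support.min'_mem h2
  · exact absurd ((Equiv.Perm.mem_cycleFactorsFinset_iff.mp hc).1).nonempty_support h2

noncomputable def Wseeds : Finset (Fin n) :=
  σ.cycleFactorsFinset.biUnion (fun c =>
    ((Finset.range c.support.card).filter (fun m => m % 2 = 1)).image
      (fun m => (σ ^ m) (basePt k j c)))

noncomputable def Useeds : Finset (Fin n) :=
  (Finset.range (k/2 + 1)).image (fun t : ℕ => j + ((2*t : ℕ) : Fin n))

noncomputable def seedSet : Finset (Fin n ⊕ Fin n) :=
  (Useeds k j).image Sum.inl ∪ (Wseeds σ k j).image Sum.inr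

lemma mem_Useeds {t : ℕ} (ht : 2 * t ≤ k) : j + ((2*t : ℕ) : Fin n) ∈ Useeds k j := by
  exact Finset.mem_image.mpr ⟨t, Finset.mem_range.mpr (by omega), rfl⟩

lemma mem_Wseeds {c : Equiv.Perm (Fin n)} (hc : c ∈ σ.cycleFactorsFinset) {m : ℕ}
    (hm1 : m % 2 = 1) (hm2 : m < c.support.card) :
    (σ ^ m) (basePt k j c) ∈ Wseeds σ k j :=
  Finset.mem_biUnion.mpr ⟨c, hc, Finset.mem_image.mpr
    ⟨m, Finset.mem_filter.mpr ⟨Finset.mem_range.mpr hm2, hm1⟩, rfl⟩⟩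

variable (hfix : ∀ i, σ i ≠ i) (hlen : ∀ c ∈ σ.cycleType, 3 ≤ c)
  (hk : k = Multiset.card (σ.cycleType.filter (fun m => Odd m)))

include hfix in
lemma sum_support_card : ∑ c ∈ σ.cycleFactorsFinset, c.support.card = n := by
  have h1 : σ.support = Finset.univ := by
    apply Finset.eq_univ_iff_forall.mpr
    intro i
    exact Equiv.Perm.mem_support.mpr (hfix i)
  have h2 := Equiv.Perm.sum_cycleType σ
  rw [h1, Finset.card_univ, Fintype.card_fin] at h2
  calc ∑ c ∈ σ.cycleFactorsFinset, c.support.card = σ.cycleType.sum := by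
        rw [Equiv.Perm.cycleType_def]
        rfl
  _ = n := h2

include hk in
lemma k_eq_sum : (σ.cycleFactorsFinset.filter (fun c => Odd c.support.card)).card = k := by
  classical
  rw [hk, cycleType_def, Multiset.filter_map, Multiset.card_map]
  have : Multiset.filter ((fun m => Odd m) ∘ Finset.card ∘ Equiv.Perm.support)
      σ.cycleFactorsFinset.val
      = Multiset.filter (fun c => Odd c.support.card) σ.cycleFactorsFinset.val := by
    apply Multiset.filter_congr
    intro x _
    rfl
  rw [this]
  rfl

include hfix hk in
lemma two_mul_sum_halves :
    2 * (∑ c ∈ σ.cycleFactorsFinset, c.support.card / 2) + k = n := by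
  classical
  have h1 : ∀ c ∈ σ.cycleFactorsFinset,
      2 * (c.support.card / 2) + (if Odd c.support.card then 1 else 0) = c.support.card := by
    intro c _
    rcases Nat.even_or_odd c.support.card with h | h
    · rw [if_neg (by simpa using h)]
      rw [Nat.even_iff] at h
      omega
    · rw [if_pos h]
      rw [Nat.odd_iff] at h
      omega
  have h2 : ∑ c ∈ σ.cycleFactorsFinset,
      (2 * (c.support.card / 2) + (if Odd c.support.card then 1 else 0)) = n := by
    rw [Finset.sum_congr rfl h1]
    exact sum_support_card σ hfix
  have e1 : ∑ c ∈ σ.cycleFactorsFinset,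
      (2 * (c.support.card / 2) + (if Odd c.support.card then 1 else 0))
      = (∑ c ∈ σ.cycleFactorsFinset, 2 * (c.support.card / 2))
        + ∑ c ∈ σ.cycleFactorsFinset, (if Odd c.support.card then 1 else 0) :=
    Finset.sum_add_distrib
  have e2 : ∑ c ∈ σ.cycleFactorsFinset, 2 * (c.support.card / 2)
      = 2 * ∑ c ∈ σ.cycleFactorsFinset, (c.support.card / 2) := by
    rw [Finset.mul_sum]
  have h3 : ∑ c ∈ σ.cycleFactorsFinset, (if Odd c.support.card then 1 else 0) = k := by
    rw [← k_eq_sum σ k hk, Finset.card_filter]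
  rw [← e2, ← h3, ← e1]
  exact h2

include hfix hlen hk in
lemma three_k_le : 3 * k ≤ n := by
  classical
  have h0 : ∀ c ∈ σ.cycleFactorsFinset, 3 ≤ c.support.card := by
    intro c hc
    apply hlen
    rw [cycleType_def]
    exact Multiset.mem_map.mpr ⟨c, by rwa [← Finset.mem_def], rfl⟩
  calc 3 * k = ∑ _c ∈ σ.cycleFactorsFinset.filter (fun c => Odd c.support.card), 3 := by
        rw [Finset.sum_const, k_eq_sum σ k hk, smul_eq_mul, mul_comm]
  _ ≤ ∑ c ∈ σ.cycleFactorsFinset.filter (fun c => Odd c.support.card), c.support.card :=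
        Finset.sum_le_sum (fun c hc => h0 c (Finset.mem_filter.mp hc).1)
  _ ≤ ∑ c ∈ σ.cycleFactorsFinset, c.support.card :=
        Finset.sum_le_sum_of_subset (Finset.filter_subset _ _)
  _ = n := sum_support_card σ hfix

include hfix hk in
lemma seedSet_card_le : (seedSet σ k j).card ≤ (n + 2) / 2 := by
  classical
  have hU : (Useeds k j).card ≤ k/2 + 1 := by
    calc (Useeds k j).card ≤ (Finset.range (k/2+1)).card := Finset.card_image_le
    _ = k/2 + 1 := Finset.card_range _
  have hW : (Wseeds σ k j).card ≤ ∑ c ∈ σ.cycleFactorsFinset, c.support.card / 2 := by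
    refine (Finset.card_biUnion_le).trans ?_
    refine Finset.sum_le_sum fun c _ => ?_
    calc _ ≤ ((Finset.range c.support.card).filter (fun m => m % 2 = 1)).card :=
          Finset.card_image_le
    _ = c.support.card / 2 := range_filter_odd_card _
  have hsum := two_mul_sum_halves σ k hfix hk
  have h1 : (seedSet σ k j).card ≤ (Useeds k j).card + (Wseeds σ k j).card := by
    refine (Finset.card_union_le _ _).trans ?_
    gcongr <;> exact Finset.card_image_le
  omega

end Construction
section Schedule
set_option linter.unusedSectionVars false

open Equiv Equiv.Perm Sum

variable {n : ℕ} [NeZero n] {σ : Equiv.Perm (Fin n)} {k : ℕ} {j : Fin n}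
  (hn : 3 ≤ n) (hfix : ∀ i, σ i ≠ i) (hlen : ∀ c ∈ σ.cycleType, 3 ≤ c)
  (hk : k = Multiset.card (σ.cycleType.filter (fun m => Odd m)))
  (hodd : ∀ i : ℕ, i < k → Odd (σ.cycleOf (j + (i : Fin n))).support.card)
  (hdist : ∀ i₁ i₂ : ℕ, i₁ < k → i₂ < k → i₁ ≠ i₂ →
      σ.cycleOf (j + (i₁ : Fin n)) ≠ σ.cycleOf (j + (i₂ : Fin n)))

lemma cast_succ_fin (m : ℕ) : ((m+1 : ℕ) : Fin n) = (m : Fin n) + 1 := by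
  push_cast
  ring

include hn hfix hlen hk in
lemma stage_u1 (m : ℕ) (hm : m ≤ k) (hcase : m % 2 = 0 ∨ m < k) :
    inl (j + (m : Fin n)) ∈ infectIter (GGP n σ) ↑(seedSet σ k j) 1 := by
  classical
  rcases Nat.even_or_odd m with he | ho
  · -- seed
    obtain ⟨t, rfl⟩ : ∃ t, m = 2 * t := ⟨m / 2, by rw [Nat.even_iff] at he; omega⟩
    apply subset_infectIter (GGP n σ) _ 1
    apply Finset.mem_coe.mpr
    exact Finset.mem_union_left _ (Finset.mem_image.mpr ⟨_, mem_Useeds k j hm, rfl⟩)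
  · have hmk : m < k := by
      rcases hcase with h | h
      · rw [Nat.odd_iff] at ho; omega
      · exact h
    have h3k := three_k_le σ k hfix hlen hk
    have hkn : k < n := by
      rw [Nat.odd_iff] at ho; omega
    rw [Nat.odd_iff] at ho
    have hm1 : m - 1 = 2 * ((m-1)/2) := by omega
    have hm2 : m + 1 = 2 * ((m+1)/2) := by omega
    have ha : inl (j + ((m-1 : ℕ) : Fin n)) ∈ (↑(seedSet σ k j) : Set (Fin n ⊕ Fin n)) := by
      apply Finset.mem_coe.mpr
      refine Finset.mem_union_left _ (Finset.mem_image.mpr ⟨_, ?_, rfl⟩)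
      rw [hm1]
      exact mem_Useeds k j (by omega)
    have hb : inl (j + ((m+1 : ℕ) : Fin n)) ∈ (↑(seedSet σ k j) : Set (Fin n ⊕ Fin n)) := by
      apply Finset.mem_coe.mpr
      refine Finset.mem_union_left _ (Finset.mem_image.mpr ⟨_, ?_, rfl⟩)
      rw [hm2]
      exact mem_Useeds k j (by omega)
    show _ ∈ infectStep (GGP n σ) (infectIter (GGP n σ) _ 0)
    refine mem_infectStep_of (GGP n σ) ?_ ha hb ?_ ?_
    · -- distinct
      simp only [ne_eq, inl.injEq]
      intro hcon
      have := add_left_cancel hcon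
      rw [Fin.ext_iff, Fin.val_natCast, Fin.val_natCast,
        Nat.mod_eq_of_lt (by omega), Nat.mod_eq_of_lt (by omega)] at this
      omega
    · -- adj to m-1
      rw [ggp_adj_ll σ hn]
      right
      have hmm : m - 1 + 1 = m := by omega
      rw [add_assoc, ← cast_succ_fin, hmm]
    · -- adj to m+1
      rw [ggp_adj_ll σ hn]
      left
      rw [cast_succ_fin, add_assoc]

lemma pow_apply_succ (σ : Equiv.Perm (Fin n)) (m : ℕ) (x : Fin n) :
    (σ^(m+1)) x = σ ((σ^m) x) := by
  rw [pow_succ', Equiv.Perm.mul_apply]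

include hfix in
lemma basePt_pow_exists (y : Fin n) :
    ∃ c, c ∈ σ.cycleFactorsFinset ∧ ∃ m, m < c.support.card ∧ (σ^m) (basePt k j c) = y := by
  classical
  have hy : σ y ≠ y := hfix y
  have hc : σ.cycleOf y ∈ σ.cycleFactorsFinset :=
    cycleOf_mem_cycleFactorsFinset_iff.mpr (mem_support.mpr hy)
  have hcyc : (σ.cycleOf y).IsCycle := (mem_cycleFactorsFinset_iff.mp hc).1
  have hb : basePt k j (σ.cycleOf y) ∈ (σ.cycleOf y).support := basePt_mem σ k j hc
  have hy' : y ∈ (σ.cycleOf y).support :=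
    mem_support_cycleOf_iff.mpr ⟨Equiv.Perm.SameCycle.refl σ y, mem_support.mpr hy⟩
  have hsame : (σ.cycleOf y).SameCycle (basePt k j (σ.cycleOf y)) y :=
    hcyc.sameCycle (mem_support.mp hb) (mem_support.mp hy')
  obtain ⟨m, hm, hmeq⟩ := hsame.exists_pow_eq'
  rw [hcyc.orderOf] at hm
  refine ⟨σ.cycleOf y, hc, m, hm, ?_⟩
  calc (σ^m) (basePt k j (σ.cycleOf y))
      = ((σ.cycleOf (basePt k j (σ.cycleOf y)))^m) (basePt k j (σ.cycleOf y)) :=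
        (cycleOf_pow_apply_self σ _ m).symm
  _ = ((σ.cycleOf y)^m) (basePt k j (σ.cycleOf y)) := by
        rw [← cycle_is_cycleOf hb hc]
  _ = y := hmeq

lemma basePt_pow_card {c : Equiv.Perm (Fin n)} (hc : c ∈ σ.cycleFactorsFinset) :
    (σ ^ c.support.card) (basePt k j c) = basePt k j c := by
  classical
  have hcyc : c.IsCycle := (mem_cycleFactorsFinset_iff.mp hc).1
  have hb : basePt k j c ∈ c.support := basePt_mem σ k j hc
  have h1 : (c ^ c.support.card) (basePt k j c) = basePt k j c := by
    rw [← hcyc.orderOf, pow_orderOf_eq_one]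
    rfl
  calc (σ ^ c.support.card) (basePt k j c)
      = ((σ.cycleOf (basePt k j c)) ^ c.support.card) (basePt k j c) :=
        (cycleOf_pow_apply_self σ _ _).symm
  _ = (c ^ c.support.card) (basePt k j c) := by rw [← cycle_is_cycleOf hb hc]
  _ = basePt k j c := h1

include hlen in
lemma card_factor_ge {c : Equiv.Perm (Fin n)} (hc : c ∈ σ.cycleFactorsFinset) :
    3 ≤ c.support.card := by
  apply hlen
  rw [cycleType_def]
  exact Multiset.mem_map.mpr ⟨c, by rwa [← Finset.mem_def], rfl⟩

lemma wseed_set_mem {c : Equiv.Perm (Fin n)} (hc : c ∈ σ.cycleFactorsFinset) {m : ℕ}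
    (hm1 : m % 2 = 1) (hm2 : m < c.support.card) :
    inr ((σ ^ m) (basePt k j c)) ∈ (↑(seedSet σ k j) : Set (Fin n ⊕ Fin n)) := by
  apply Finset.mem_coe.mpr
  exact Finset.mem_union_right _ (Finset.mem_image.mpr ⟨_, mem_Wseeds σ k j hc hm1 hm2, rfl⟩)

include hn hfix hlen in
lemma mid_infect {c : Equiv.Perm (Fin n)} (hc : c ∈ σ.cycleFactorsFinset) {t : ℕ}
    (ht : t % 2 = 1) (ht2 : t + 2 < c.support.card) :
    inr ((σ^(t+1)) (basePt k j c)) ∈ infectIter (GGP n σ) ↑(seedSet σ k j) 1 := by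
  have hsq := sigma_sq_ne hfix hlen
  have hWp := wseed_set_mem (σ := σ) (k := k) (j := j) hc (m := t+2) (by omega) ht2
  have hWm := wseed_set_mem (σ := σ) (k := k) (j := j) hc (m := t) ht (by omega)
  show _ ∈ infectStep (GGP n σ) (infectIter (GGP n σ) _ 0)
  refine mem_infectStep_of (GGP n σ) ?_ hWp hWm ?_ ?_
  · simp only [ne_eq, inr.injEq]
    intro hcon
    apply hsq ((σ^t) (basePt k j c))
    rw [← pow_apply_succ, ← pow_apply_succ]
    exact hcon
  · rw [ggp_adj_rr σ hfix]
    left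
    rw [pow_apply_succ]
  · rw [ggp_adj_rr σ hfix]
    right
    rw [pow_apply_succ]

include hn hfix hlen hk hodd hdist in
lemma stage_v (y : Fin n) : inr y ∈ infectIter (GGP n σ) ↑(seedSet σ k j) 3 := by
  classical
  have hsq := sigma_sq_ne hfix hlen
  obtain ⟨c, hc, m, hm, rfl⟩ := basePt_pow_exists (σ := σ) (k := k) (j := j) hfix y
  have hL3 : 3 ≤ c.support.card := card_factor_ge hlen hc
  have hLfix := basePt_pow_card (σ := σ) (k := k) (j := j) hc
  rcases Nat.even_or_odd m with hme | hmo
  case inr =>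
    -- m odd : it is a seed
    exact subset_infectIter (GGP n σ) _ 3 (wseed_set_mem hc (Nat.odd_iff.mp hmo) hm)
  rw [Nat.even_iff] at hme
  by_cases hex : ∃ i, i < k ∧ j + (i : Fin n) ∈ c.support
  · -- distinguished odd cycle
    have hb_eq : basePt k j c = j + ((Classical.choose hex : ℕ) : Fin n) := by
      rw [basePt, dif_pos hex]
    obtain ⟨hi₀k, hi₀mem⟩ := Classical.choose_spec hex
    have hceq : c = σ.cycleOf (j + ((Classical.choose hex : ℕ) : Fin n)) :=
      cycle_is_cycleOf hi₀mem hc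
    have hLodd : c.support.card % 2 = 1 := by
      rw [← Nat.odd_iff, hceq]
      exact hodd _ hi₀k
    -- the base point is infected at time 2
    have hb2 : inr (basePt k j c) ∈ infectIter (GGP n σ) ↑(seedSet σ k j) 2 := by
      show _ ∈ infectStep (GGP n σ) (infectIter (GGP n σ) _ 1)
      refine mem_infectStep_of (GGP n σ) (a := inl (j + ((Classical.choose hex : ℕ) : Fin n)))
        (b := inr ((σ^1) (basePt k j c))) ?_ ?_ ?_ ?_ ?_
      · simp
      · exact stage_u1 hn hfix hlen hk _ hi₀k.le (Or.inr hi₀k)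
      · exact subset_infectIter (GGP n σ) _ 1 (wseed_set_mem hc (by norm_num) (by omega))
      · rw [ggp_adj_rl]
        exact hb_eq.symm
      · rw [ggp_adj_rr σ hfix]
        left
        rw [pow_one]
    by_cases hm0 : m = 0
    · subst hm0
      apply infectIter_le_of_le (GGP n σ) _ (by norm_num : 2 ≤ 3)
      simpa using hb2
    by_cases hmL : m = c.support.card - 1
    · -- last element of the pair
      show _ ∈ infectStep (GGP n σ) (infectIter (GGP n σ) _ 2)
      refine mem_infectStep_of (GGP n σ) (a := inr (basePt k j c))
        (b := inr ((σ^(c.support.card - 2)) (basePt k j c))) ?_ hb2 ?_ ?_ ?_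
      · simp only [ne_eq, inr.injEq]
        intro hcon
        have e : σ (σ ((σ^(c.support.card - 2)) (basePt k j c))) = basePt k j c := by
          rw [← pow_apply_succ, ← pow_apply_succ]
          have : c.support.card - 2 + 1 + 1 = c.support.card := by omega
          rw [this, hLfix]
        exact hsq ((σ^(c.support.card - 2)) (basePt k j c)) (by rw [e]; exact hcon)
      · exact subset_infectIter (GGP n σ) _ 2 (wseed_set_mem hc (by omega) (by omega))
      · rw [ggp_adj_rr σ hfix]
        left
        rw [← pow_apply_succ]
        have : m + 1 = c.support.card := by omega
        rw [this, hLfix]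
      · rw [ggp_adj_rr σ hfix]
        right
        rw [← pow_apply_succ]
        have : c.support.card - 2 + 1 = m := by omega
        rw [this]
    · -- middle element
      have hm2 : 2 ≤ m := by omega
      obtain ⟨t, rfl⟩ : ∃ t, m = t + 1 := ⟨m - 1, by omega⟩
      apply infectIter_le_of_le (GGP n σ) _ (by norm_num : 1 ≤ 3)
      exact mid_infect hn hfix hlen hc (by omega) (by omega)
  · -- even cycle
    have hLe : c.support.card % 2 = 0 := by
      by_contra h
      obtain ⟨i, hik, hceq⟩ := odd_factor_eq hfix hk hodd hdist hc (Nat.odd_iff.mpr (by omega))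
      refine hex ⟨i, hik, ?_⟩
      rw [hceq]
      exact mem_support_cycleOf_iff.mpr ⟨Equiv.Perm.SameCycle.refl σ _, mem_support.mpr (hfix _)⟩
    by_cases hm0 : m = 0
    · subst hm0
      apply infectIter_le_of_le (GGP n σ) _ (by norm_num : 1 ≤ 3)
      show _ ∈ infectStep (GGP n σ) (infectIter (GGP n σ) _ 0)
      refine mem_infectStep_of (GGP n σ) (a := inr ((σ^1) (basePt k j c)))
        (b := inr ((σ^(c.support.card - 1)) (basePt k j c))) ?_ ?_ ?_ ?_ ?_
      · simp only [ne_eq, inr.injEq]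
        intro hcon
        apply hsq (basePt k j c)
        have e1 : σ (basePt k j c) = (σ^1) (basePt k j c) := by rw [pow_one]
        rw [e1, hcon, ← pow_apply_succ]
        have : c.support.card - 1 + 1 = c.support.card := by omega
        rw [this, hLfix]
      · exact wseed_set_mem hc (by norm_num) (by omega)
      · exact wseed_set_mem hc (by omega) (by omega)
      · rw [ggp_adj_rr σ hfix]
        left
        rw [pow_apply_succ]
      · rw [ggp_adj_rr σ hfix]
        right
        rw [← pow_apply_succ, pow_zero]
        have : c.support.card - 1 + 1 = c.support.card := by omega
        rw [this, hLfix, Equiv.Perm.one_apply]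
    · have hm2 : 2 ≤ m := by omega
      obtain ⟨t, rfl⟩ : ∃ t, m = t + 1 := ⟨m - 1, by omega⟩
      apply infectIter_le_of_le (GGP n σ) _ (by norm_num : 1 ≤ 3)
      exact mid_infect hn hfix hlen hc (by omega) (by omega)

include hn hfix hlen hk hodd hdist in
lemma stage_u_all (m : ℕ) (hmn : m < n) :
    inl (j + (m : Fin n)) ∈ infectIter (GGP n σ) ↑(seedSet σ k j) (3 + m) := by
  induction m with
  | zero =>
    apply subset_infectIter (GGP n σ) _ (3 + 0)
    apply Finset.mem_coe.mpr
    refine Finset.mem_union_left _ (Finset.mem_image.mpr ⟨_, mem_Useeds k j (t := 0) (by omega), ?_⟩)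
    norm_num
  | succ m ih =>
    have h1 : inl (j + (m : Fin n)) ∈ infectIter (GGP n σ) ↑(seedSet σ k j) (3 + m) :=
      ih (by omega)
    have h2 : inr (j + ((m+1 : ℕ) : Fin n)) ∈ infectIter (GGP n σ) ↑(seedSet σ k j) (3 + m) :=
      infectIter_le_of_le (GGP n σ) _ (by omega : 3 ≤ 3 + m)
        (stage_v hn hfix hlen hk hodd hdist _)
    show _ ∈ infectStep (GGP n σ) (infectIter (GGP n σ) _ (3 + m))
    refine mem_infectStep_of (GGP n σ) (a := inl (j + (m : Fin n)))
      (b := inr (j + ((m+1 : ℕ) : Fin n))) (by simp) h1 h2 ?_ ?_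
    · rw [ggp_adj_ll σ hn]
      right
      rw [cast_succ_fin, add_assoc]
    · rw [ggp_adj_lr]

include hn hfix hlen hk hodd hdist in
lemma seed_is_hull : IsHullSet (GGP n σ) ↑(seedSet σ k j) := by
  refine ⟨3 + n, Set.eq_univ_iff_forall.mpr ?_⟩
  rintro (x | y)
  · have hx : j + (((x - j).val : ℕ) : Fin n) = x := by
      rw [Fin.cast_val_eq_self]
      abel
    rw [← hx]
    exact infectIter_le_of_le (GGP n σ) _ (by omega : 3 + (x - j).val ≤ 3 + n)
      (stage_u_all hn hfix hlen hk hodd hdist _ (x - j).isLt)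
  · exact infectIter_le_of_le (GGP n σ) _ (by omega : 3 ≤ 3 + n)
      (stage_v hn hfix hlen hk hodd hdist y)

end Schedule
theorem stmt19 (n : ℕ) [NeZero n] (hn : 3 ≤ n) (σ : Equiv.Perm (Fin n))
    (hσ : σ ≠ 1) (hfix : ∀ i, σ i ≠ i)
    (hlen : ∀ c ∈ σ.cycleType, 3 ≤ c)
    (k : ℕ) (hk : k = Multiset.card (σ.cycleType.filter (fun m => Odd m)))
    (hpath : ∃ j : Fin n,
      (∀ i : ℕ, i < k → Odd (σ.cycleOf (j + (i : Fin n))).support.card) ∧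
      (∀ i₁ i₂ : ℕ, i₁ < k → i₂ < k → i₁ ≠ i₂ →
        σ.cycleOf (j + (i₁ : Fin n)) ≠ σ.cycleOf (j + (i₂ : Fin n)))) :
    hullNumber (GGP n σ) = (n + 2) / 2 := by
  classical
  obtain ⟨j, hodd, hdist⟩ := hpath
  have hsq := sigma_sq_ne hfix hlen
  have hcardV : Fintype.card (Fin n ⊕ Fin n) = n + n := by
    rw [Fintype.card_sum, Fintype.card_fin]
  -- upper bound : a hull set of exactly the right size
  have hseed := seedSet_card_le σ k j hfix hk
  obtain ⟨S', hS'1, _, hS'card⟩ := Finset.exists_subsuperset_card_eq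
    (Finset.subset_univ (seedSet σ k j)) hseed
    (by rw [Finset.card_univ, hcardV]; omega)
  have hS'hull : IsHullSet (GGP n σ) ↑S' :=
    IsHullSet.mono (GGP n σ) (Finset.coe_subset.mpr hS'1)
      (seed_is_hull hn hfix hlen hk hodd hdist)
  have hmem : (n + 2) / 2 ∈ {m | ∃ S : Set (Fin n ⊕ Fin n), S.ncard = m ∧
      IsHullSet (GGP n σ) S} :=
    ⟨↑S', by rw [Set.ncard_coe_finset, hS'card], hS'hull⟩
  -- lower bound
  have hlow : ∀ m ∈ {m | ∃ S : Set (Fin n ⊕ Fin n), S.ncard = m ∧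
      IsHullSet (GGP n σ) S}, (n + 2) / 2 ≤ m := by
    rintro m ⟨S, hSm, hShull⟩
    have hfin : S.Finite := S.toFinite
    have hcoe : (↑hfin.toFinset : Set (Fin n ⊕ Fin n)) = S := hfin.coe_toFinset
    have hcard : hfin.toFinset.card = m := by
      rw [← hSm]
      conv_rhs => rw [← hcoe]
      rw [Set.ncard_coe_finset]
    have := cubic_hull_lower (GGP n σ) (NfGGP σ) (NfGGP_spec σ hn hfix)
      (NfGGP_card σ hn hfix hsq) (S := hfin.toFinset) (by rwa [hcoe])
    rw [hcardV, hcard] at this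
    omega
  rw [hullNumber]
  exact le_antisymm (Nat.sInf_le hmem) (le_csInf ⟨_, hmem⟩ hlow)
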